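/- For a stationary Markov chain, the uniform mixing coefficients satisfy 2φₙ ≤ (2φ₁)ⁿ for all n ≥ 1, where φₙ = ess sup_x sup_B |Pⁿ(x,B) − π(B)|. -/

import Mathlib

open MeasureTheory ProbabilityTheory Set Filter
open scoped ENNReal NNReal

/-- The n-fold composition (n-step transition kernel) of a kernel. -/
noncomputable def kpow {α : Type*} [MeasurableSpace α] (κ : Kernel α α) : ℕ → Kernel α α
  | 0 => Kernel.id
  | n + 1 => κ ∘ₖ kpow κ n

/-- The uniform (Lebesgue) probability measure on `[0,1]`. -/
noncomputable def unif01 : Measure ℝ := volume.restrict (Icc (0:ℝ) 1)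

/-- `κ` is the transition kernel of the stationary Markov chain generated by the copula `C`
(with uniform marginals), i.e. `κ x [0,y] = ∂₁C(x,y)` for a.e. `x`. -/
def IsCopulaKernel (C : ℝ → ℝ → ℝ) (κ : Kernel ℝ ℝ) : Prop :=
  ∀ y ∈ Icc (0:ℝ) 1, ∀ᵐ x ∂unif01, κ x (Iic y) = ENNReal.ofReal (deriv (fun s => C s y) x)

/-- The uniform (φ-)mixing coefficient of a transition kernel `κ` with invariant measure `μ`:
`φ = ess sup_x sup_B |κ(x,B) − μ(B)|` (as a value in `ℝ≥0∞`). -/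
noncomputable def phiKernel {α : Type*} [MeasurableSpace α] (κ : Kernel α α) (μ : Measure α) : ℝ≥0∞ :=
  essSup (fun x => ⨆ B : {s : Set α // MeasurableSet s},
    ENNReal.ofReal |(κ x (B : Set α)).toReal - (μ (B : Set α)).toReal|) μ


lemma lemA {α : Type*} [MeasurableSpace α] {μ ν : Measure α}
    [IsProbabilityMeasure μ] [IsProbabilityMeasure ν]
    {g : α → ℝ} (hg : Measurable g) {K d : ℝ} (hd : 0 ≤ d)
    (hg0μ : 0 ≤ᵐ[μ] g) (hg0ν : 0 ≤ᵐ[ν] g) (hgKμ : ∀ᵐ x ∂μ, g x ≤ K)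
    (hT : ∀ B, MeasurableSet B → μ B ≤ ν B + ENNReal.ofReal d) :
    ∫⁻ x, ENNReal.ofReal (g x) ∂μ ≤ ∫⁻ x, ENNReal.ofReal (g x) ∂ν + ENNReal.ofReal (K * d) := by
  rw [lintegral_eq_lintegral_meas_lt μ hg0μ hg.aemeasurable,
      lintegral_eq_lintegral_meas_lt ν hg0ν hg.aemeasurable]
  have hbad : μ {a | ¬ g a ≤ K} = 0 := by simpa [ae_iff] using hgKμ
  have mono : ∀ t ∈ Ioi (0:ℝ),
      μ {a | t < g a} ≤ (Ioc (0:ℝ) K).indicator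
        (fun t => ν {a | t < g a} + ENNReal.ofReal d) t := by
    intro t ht
    by_cases h : t ≤ K
    · rw [indicator_of_mem (mem_Ioc.2 ⟨ht, h⟩)]
      exact hT _ (measurableSet_lt measurable_const hg)
    · rw [indicator_of_notMem (fun hm => h hm.2)]
      refine le_of_eq (measure_mono_null (fun a ha => ?_) hbad)
      simp only [mem_setOf_eq] at ha ⊢
      intro hle
      exact h (le_trans (le_of_lt ha) hle)
  calc ∫⁻ t in Ioi 0, μ {a | t < g a}
      ≤ ∫⁻ t in Ioi 0, (Ioc (0:ℝ) K).indicator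
          (fun t => ν {a | t < g a} + ENNReal.ofReal d) t :=
        lintegral_mono_ae ((ae_restrict_iff' measurableSet_Ioi).2 (Eventually.of_forall mono))
    _ = ∫⁻ t in Ioc 0 K, (ν {a | t < g a} + ENNReal.ofReal d) := by
        rw [lintegral_indicator measurableSet_Ioc, Measure.restrict_restrict measurableSet_Ioc,
          inter_eq_left.2 Ioc_subset_Ioi_self]
    _ = (∫⁻ t in Ioc 0 K, ν {a | t < g a}) + ENNReal.ofReal d * volume (Ioc (0:ℝ) K) := by
        rw [lintegral_add_right _ measurable_const, lintegral_const,
          Measure.restrict_apply_univ]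
    _ ≤ (∫⁻ t in Ioi 0, ν {a | t < g a}) + ENNReal.ofReal (K * d) := by
        gcongr
        · exact Ioc_subset_Ioi_self
        · rw [Real.volume_Ioc, sub_zero, ← ENNReal.ofReal_mul hd, mul_comm]

lemma lemB {α : Type*} [MeasurableSpace α] {μ ν : Measure α}
    [IsProbabilityMeasure μ] [IsProbabilityMeasure ν]
    {h : α → ℝ} (hh : Measurable h) {t d : ℝ} (ht : 0 ≤ t) (hd : 0 ≤ d)
    (hμ : ∀ᵐ y ∂μ, |h y| ≤ t) (hν : ∀ᵐ y ∂ν, |h y| ≤ t)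
    (hT : ∀ B, MeasurableSet B → μ B ≤ ν B + ENNReal.ofReal d) :
    ∫ y, h y ∂μ ≤ ∫ y, h y ∂ν + 2 * t * d := by
  set g : α → ℝ := fun y => h y + t with hgdef
  have hgm : Measurable g := hh.add measurable_const
  have hg0μ : 0 ≤ᵐ[μ] g := hμ.mono fun y hy => by
    simp only [hgdef, Pi.zero_apply]; have := abs_le.1 hy; linarith
  have hg0ν : 0 ≤ᵐ[ν] g := hν.mono fun y hy => by
    simp only [hgdef, Pi.zero_apply]; have := abs_le.1 hy; linarith
  have hgKμ : ∀ᵐ y ∂μ, g y ≤ 2 * t := hμ.mono fun y hy => by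
    have := abs_le.1 hy; simp only [hgdef]; linarith
  have hgKν : ∀ᵐ y ∂ν, g y ≤ 2 * t := hν.mono fun y hy => by
    have := abs_le.1 hy; simp only [hgdef]; linarith
  have key := lemA hgm hd hg0μ hg0ν hgKμ hT
  have hνfin : ∫⁻ y, ENNReal.ofReal (g y) ∂ν ≠ ∞ := by
    refine ne_of_lt (lt_of_le_of_lt (lintegral_mono_ae (hgKν.mono fun y hy =>
      ENNReal.ofReal_le_ofReal hy)) ?_)
    simp [lintegral_const]
    exact ENNReal.mul_lt_top (by norm_num) ENNReal.ofReal_lt_top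
  have hμint : Integrable h μ := Integrable.mono' (integrable_const t)
    hh.aestronglyMeasurable hμ
  have hνint : Integrable h ν := Integrable.mono' (integrable_const t)
    hh.aestronglyMeasurable hν
  have eμ : ∫ y, g y ∂μ = (∫⁻ y, ENNReal.ofReal (g y) ∂μ).toReal :=
    integral_eq_lintegral_of_nonneg_ae hg0μ (hgm.aestronglyMeasurable)
  have eν : ∫ y, g y ∂ν = (∫⁻ y, ENNReal.ofReal (g y) ∂ν).toReal :=
    integral_eq_lintegral_of_nonneg_ae hg0ν (hgm.aestronglyMeasurable)
  have hle : ∫ y, g y ∂μ ≤ ∫ y, g y ∂ν + 2 * t * d := by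
    rw [eμ, eν]
    calc (∫⁻ y, ENNReal.ofReal (g y) ∂μ).toReal
        ≤ ((∫⁻ y, ENNReal.ofReal (g y) ∂ν) + ENNReal.ofReal (2 * t * d)).toReal :=
          ENNReal.toReal_mono (by simp [hνfin, ENNReal.add_ne_top]) key
      _ = (∫⁻ y, ENNReal.ofReal (g y) ∂ν).toReal + 2 * t * d := by
          rw [ENNReal.toReal_add hνfin ENNReal.ofReal_ne_top,
            ENNReal.toReal_ofReal (by positivity)]
  have iμ : ∫ y, g y ∂μ = ∫ y, h y ∂μ + t := by
    simp [hgdef, integral_add hμint (integrable_const t)]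
  have iν : ∫ y, g y ∂ν = ∫ y, h y ∂ν + t := by
    simp [hgdef, integral_add hνint (integrable_const t)]
  rw [iμ, iν] at hle
  linarith

section aux
variable {α : Type*} [MeasurableSpace α]

instance kpow_markov (κ : Kernel α α) [IsMarkovKernel κ] (n : ℕ) :
    IsMarkovKernel (kpow κ n) := by
  induction n with
  | zero => rw [kpow]; infer_instance
  | succ n ih => rw [kpow]; infer_instance

lemma bind_kpow (π : Measure α) (κ : Kernel α α) (hinv : π.bind κ = π) (n : ℕ) :
    π.bind (kpow κ n) = π := by
  induction n with
  | zero =>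
      rw [kpow]
      have : ⇑(Kernel.id : Kernel α α) = fun a => Measure.dirac a := by
        funext a; simp [Kernel.id, Kernel.deterministic_apply]
      rw [this]
      exact Measure.bind_dirac
  | succ n ih =>
      rw [kpow]
      have : π.bind ⇑(κ ∘ₖ kpow κ n) = (π.bind (kpow κ n)).bind κ := by
        rw [Measure.bind_bind (Kernel.measurable _).aemeasurable (Kernel.measurable κ).aemeasurable]
        rfl
      rw [this, ih, hinv]

lemma phi_le_one (κ : Kernel α α) [IsMarkovKernel κ] (π : Measure α)
    [IsProbabilityMeasure π] : phiKernel κ π ≤ 1 := by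
  refine essSup_le_of_ae_le _ (Eventually.of_forall fun x => ?_)
  refine iSup_le fun B => ?_
  have h1 : (κ x (B : Set α)).toReal ≤ 1 := by
    have := prob_le_one (μ := κ x) (s := (B : Set α))
    simpa using ENNReal.toReal_mono ENNReal.one_ne_top this
  have h2 : (π (B : Set α)).toReal ≤ 1 := by
    have := prob_le_one (μ := π) (s := (B : Set α))
    simpa using ENNReal.toReal_mono ENNReal.one_ne_top this
  have h3 : |(κ x (B : Set α)).toReal - (π (B : Set α)).toReal| ≤ 1 := by
    rw [abs_le]; constructor <;> [linarith [ENNReal.toReal_nonneg (a := κ x (B : Set α))];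
      linarith [ENNReal.toReal_nonneg (a := π (B : Set α))]]
  calc ENNReal.ofReal _ ≤ ENNReal.ofReal 1 := ENNReal.ofReal_le_ofReal h3
    _ = 1 := ENNReal.ofReal_one

end aux

lemma phi_step {α : Type*} [MeasurableSpace α] (π : Measure α) [IsProbabilityMeasure π]
    (κ : Kernel α α) [IsMarkovKernel κ] (hinv : π.bind κ = π) (n : ℕ) :
    phiKernel (kpow κ (n+1)) π ≤ 2 * phiKernel κ π * phiKernel (kpow κ n) π := by
  set φ1 := phiKernel κ π with hφ1
  set φn := phiKernel (kpow κ n) π with hφn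
  have hφ1top : φ1 ≠ ∞ :=
    ne_of_lt (lt_of_le_of_lt (phi_le_one κ π) ENNReal.one_lt_top)
  have hφntop : φn ≠ ∞ :=
    ne_of_lt (lt_of_le_of_lt (phi_le_one (kpow κ n) π) ENNReal.one_lt_top)
  set t1 := φ1.toReal with ht1def
  set c := φn.toReal with hcdef
  have ht1 : 0 ≤ t1 := ENNReal.toReal_nonneg
  have hc : 0 ≤ c := ENNReal.toReal_nonneg
  have h1ae : ∀ᵐ y ∂π, ∀ B : Set α, MeasurableSet B →
      |(κ y B).toReal - (π B).toReal| ≤ t1 := by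
    have hsup := ENNReal.ae_le_essSup (μ := π) (f := fun y =>
      ⨆ B : {s : Set α // MeasurableSet s},
        ENNReal.ofReal |(κ y (B : Set α)).toReal - (π (B : Set α)).toReal|)
    filter_upwards [hsup] with y hy
    intro B hB
    have h2 : ENNReal.ofReal |(κ y B).toReal - (π B).toReal| ≤ φ1 := by
      refine le_trans (le_iSup (fun B' : {s : Set α // MeasurableSet s} =>
        ENNReal.ofReal |(κ y (B' : Set α)).toReal - (π (B' : Set α)).toReal|)
        ⟨B, hB⟩) (le_trans hy ?_)
      rw [hφ1]; rfl
    exact (ENNReal.ofReal_le_iff_le_toReal hφ1top).1 h2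
  have hnae : ∀ᵐ x ∂π, ∀ B : Set α, MeasurableSet B →
      |((kpow κ n) x B).toReal - (π B).toReal| ≤ c := by
    have hsup := ENNReal.ae_le_essSup (μ := π) (f := fun y =>
      ⨆ B : {s : Set α // MeasurableSet s},
        ENNReal.ofReal |((kpow κ n) y (B : Set α)).toReal - (π (B : Set α)).toReal|)
    filter_upwards [hsup] with y hy
    intro B hB
    have h2 : ENNReal.ofReal |((kpow κ n) y B).toReal - (π B).toReal| ≤ φn := by
      refine le_trans (le_iSup (fun B' : {s : Set α // MeasurableSet s} =>
        ENNReal.ofReal |((kpow κ n) y (B' : Set α)).toReal - (π (B' : Set α)).toReal|)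
        ⟨B, hB⟩) (le_trans hy ?_)
      rw [hφn]; rfl
    exact (ENNReal.ofReal_le_iff_le_toReal hφntop).1 h2
  set S := {y : α | ¬ ∀ B : Set α, MeasurableSet B →
      |(κ y B).toReal - (π B).toReal| ≤ t1} with hS
  have hSnull : π S = 0 := ae_iff.1 h1ae
  set N := toMeasurable π S with hN
  have hNmeas : MeasurableSet N := measurableSet_toMeasurable π S
  have hNnull : π N = 0 := by rw [hN, measure_toMeasurable]; exact hSnull
  have hker0 : ∀ᵐ x ∂π, (kpow κ n) x N = 0 := by
    have hint : ∫⁻ x, (kpow κ n) x N ∂π = 0 := by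
      rw [← Measure.bind_apply hNmeas (Kernel.measurable _).aemeasurable, bind_kpow π κ hinv n]
      exact hNnull
    have h0 := (lintegral_eq_zero_iff (Kernel.measurable_coe _ hNmeas)).1 hint
    filter_upwards [h0] with x hx using hx
  have main : ∀ᵐ x ∂π, (⨆ B : {s : Set α // MeasurableSet s},
      ENNReal.ofReal |((kpow κ (n+1)) x (B : Set α)).toReal - (π (B : Set α)).toReal|)
        ≤ 2 * φ1 * φn := by
    filter_upwards [hnae, hker0] with x hx hx0
    refine iSup_le fun Bp => ?_
    obtain ⟨B, hB⟩ := Bp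
    set μx := (kpow κ n) x with hμx
    set h : α → ℝ := fun y => (κ y B).toReal - (π B).toReal with hh
    have hhm : Measurable h :=
      ((Kernel.measurable_coe κ hB).ennreal_toReal).sub measurable_const
    have hμb : ∀ᵐ y ∂μx, |h y| ≤ t1 := by
      have hae : ∀ᵐ y ∂μx, y ∉ N := measure_eq_zero_iff_ae_notMem.1 hx0
      filter_upwards [hae] with y hy
      have hyS : y ∉ S := fun hySS => hy (subset_toMeasurable π S hySS)
      have hyP : ∀ B' : Set α, MeasurableSet B' →
          |(κ y B').toReal - (π B').toReal| ≤ t1 := not_not.1 hyS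
      exact hyP B hB
    have hπb : ∀ᵐ y ∂π, |h y| ≤ t1 := h1ae.mono fun y hy => hy B hB
    have hTμπ : ∀ B', MeasurableSet B' → μx B' ≤ π B' + ENNReal.ofReal c := by
      intro B' hB'
      have hx' := hx B' hB'
      calc μx B' = ENNReal.ofReal ((μx B').toReal) :=
            (ENNReal.ofReal_toReal (measure_ne_top _ _)).symm
        _ ≤ ENNReal.ofReal ((π B').toReal + c) :=
            ENNReal.ofReal_le_ofReal (by linarith [(abs_le.1 hx').2])
        _ = ENNReal.ofReal ((π B').toReal) + ENNReal.ofReal c :=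
            ENNReal.ofReal_add ENNReal.toReal_nonneg hc
        _ = π B' + ENNReal.ofReal c := by rw [ENNReal.ofReal_toReal (measure_ne_top _ _)]
    have hTπμ : ∀ B', MeasurableSet B' → π B' ≤ μx B' + ENNReal.ofReal c := by
      intro B' hB'
      have hx' := hx B' hB'
      calc π B' = ENNReal.ofReal ((π B').toReal) :=
            (ENNReal.ofReal_toReal (measure_ne_top _ _)).symm
        _ ≤ ENNReal.ofReal ((μx B').toReal + c) :=
            ENNReal.ofReal_le_ofReal (by linarith [(abs_le.1 hx').1])
        _ = ENNReal.ofReal ((μx B').toReal) + ENNReal.ofReal c :=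
            ENNReal.ofReal_add ENNReal.toReal_nonneg hc
        _ = μx B' + ENNReal.ofReal c := by rw [ENNReal.ofReal_toReal (measure_ne_top _ _)]
    have hintk : ∀ (m : Measure α) [IsProbabilityMeasure m],
        Integrable (fun y => (κ y B).toReal) m := by
      intro m _
      refine Integrable.mono' (integrable_const (1:ℝ))
        (((Kernel.measurable_coe κ hB).ennreal_toReal).aestronglyMeasurable)
        (Eventually.of_forall fun y => ?_)
      rw [Real.norm_eq_abs, abs_of_nonneg ENNReal.toReal_nonneg]
      simpa using ENNReal.toReal_mono ENNReal.one_ne_top (prob_le_one (μ := κ y) (s := B))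
    have hint_pi : ∫ y, h y ∂π = 0 := by
      have e1 : ∫⁻ y, κ y B ∂π = π B := by
        rw [← Measure.bind_apply hB (Kernel.measurable κ).aemeasurable, hinv]
      have e2 : ∫ y, (κ y B).toReal ∂π = (π B).toReal := by
        rw [integral_toReal ((Kernel.measurable_coe κ hB).aemeasurable)
          (Eventually.of_forall fun y => measure_lt_top _ _), e1]
      rw [hh]
      rw [integral_sub (hintk π) (integrable_const _), e2, integral_const]
      simp
    have hint_mu : ∫ y, h y ∂μx = ((kpow κ (n+1)) x B).toReal - (π B).toReal := by
      have e1 : (kpow κ (n+1)) x B = ∫⁻ y, κ y B ∂μx := by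
        rw [kpow]
        exact Kernel.comp_apply' κ (kpow κ n) x hB
      have e2 : ∫ y, (κ y B).toReal ∂μx = ((kpow κ (n+1)) x B).toReal := by
        rw [integral_toReal ((Kernel.measurable_coe κ hB).aemeasurable)
          (Eventually.of_forall fun y => measure_lt_top _ _), e1]
      rw [hh]
      rw [integral_sub (hintk μx) (integrable_const _), e2, integral_const]
      simp
    have key1 := lemB hhm ht1 hc hμb hπb hTμπ
    have key2 := lemB hhm ht1 hc hπb hμb hTπμ
    rw [hint_pi, hint_mu] at key1 key2
    have habs : |((kpow κ (n+1)) x B).toReal - (π B).toReal| ≤ 2 * t1 * c := by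
      rw [abs_le]; constructor <;> linarith
    calc ENNReal.ofReal |((kpow κ (n+1)) x B).toReal - (π B).toReal|
        ≤ ENNReal.ofReal (2 * t1 * c) := ENNReal.ofReal_le_ofReal habs
      _ = 2 * φ1 * φn := by
          rw [ENNReal.ofReal_mul (by positivity), ENNReal.ofReal_mul (by norm_num),
            ht1def, hcdef, ENNReal.ofReal_toReal hφ1top, ENNReal.ofReal_toReal hφntop]
          norm_num
  exact essSup_le_of_ae_le _ main

/-- For a stationary Markov chain, `2 φₙ ≤ (2 φ₁)ⁿ` for all `n ≥ 1`. -/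
theorem two_phi_n_le_pow {α : Type*} [MeasurableSpace α]
    (π : Measure α) [IsProbabilityMeasure π] (κ : Kernel α α) [IsMarkovKernel κ]
    (hinv : π.bind κ = π) (n : ℕ) (hn : 1 ≤ n) :
    2 * phiKernel (kpow κ n) π ≤ (2 * phiKernel κ π) ^ n := by
  induction n, hn using Nat.le_induction with
  | base =>
      have h1 : kpow κ 1 = κ := by rw [kpow, kpow, Kernel.comp_id]
      rw [h1, pow_one]
  | succ n hn ih =>
      calc 2 * phiKernel (kpow κ (n+1)) π
          ≤ 2 * (2 * phiKernel κ π * phiKernel (kpow κ n) π) :=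
            mul_le_mul_right (phi_step π κ hinv n) 2
        _ = (2 * phiKernel κ π) * (2 * phiKernel (kpow κ n) π) := by ring
        _ ≤ (2 * phiKernel κ π) * (2 * phiKernel κ π) ^ n := mul_le_mul_right ih _
        _ = (2 * phiKernel κ π) ^ (n+1) := by rw [pow_succ]; ring
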